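/- Let K be a totally real number field. There exists a constant λ ≥ 1, depending only on K, such that for every totally positive element h of the ring of integers O there is a unit ε of O with (ε²h)^(ν) ≤ λ·(ε²h)^(μ) for all pairs of real embeddings ν, μ of K. -/

import Mathlib

open NumberField Module

/-- In a finite-dimensional real normed space, any `ℤ`-submodule whose real span is the
whole space comes within a uniformly bounded distance of every point. -/
theorem exists_approx_of_span_top {E : Type*} [NormedAddCommGroup E] [NormedSpace ℝ E]
    [FiniteDimensional ℝ E] (L : Submodule ℤ E)
    (hL : Submodule.span ℝ (L : Set E) = ⊤) :
    ∃ C : ℝ, 0 ≤ C ∧ ∀ v : E, ∃ u ∈ L, ‖v - u‖ ≤ C := by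
  obtain ⟨s, hsL, hs_span, hs_li⟩ := exists_linearIndependent ℝ (L : Set E)
  rw [hL] at hs_span
  haveI : Fintype s := hs_li.setFinite.fintype
  let b : Basis s ℝ E := Basis.mk hs_li (by rw [Subtype.range_coe, hs_span])
  refine ⟨∑ i : s, ‖b i‖, Finset.sum_nonneg fun i _ => norm_nonneg _, fun v => ?_⟩
  set c : s → ℝ := fun i => b.repr v i with hc
  refine ⟨∑ i : s, (⌊c i⌋ : ℤ) • b i, ?_, ?_⟩
  · refine Submodule.sum_mem _ fun i _ => Submodule.smul_mem _ _ ?_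
    have : (b i : E) ∈ (L : Set E) := hsL (by simp [b, Basis.mk_apply])
    exact this
  · have hv : v = ∑ i : s, c i • b i := by
      conv_lhs => rw [← b.sum_repr v]
    rw [hv, ← Finset.sum_sub_distrib]
    refine (norm_sum_le _ _).trans (Finset.sum_le_sum fun i _ => ?_)
    have : c i • b i - (⌊c i⌋ : ℤ) • b i = (c i - ⌊c i⌋) • b i := by
      rw [← Int.cast_smul_eq_zsmul ℝ, ← sub_smul]
    rw [this, norm_smul]
    have h0 : (0:ℝ) ≤ c i - ⌊c i⌋ := sub_nonneg.mpr (Int.floor_le _)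
    have h1 : c i - ⌊c i⌋ ≤ 1 := by
      have := Int.lt_floor_add_one (c i); linarith
    calc ‖(c i - ⌊c i⌋ : ℝ)‖ * ‖b i‖ ≤ 1 * ‖b i‖ := by
          apply mul_le_mul_of_nonneg_right _ (norm_nonneg _)
          rw [Real.norm_eq_abs, abs_of_nonneg h0]; exact h1
      _ = ‖b i‖ := one_mul _



/-- Every totally positive algebraic integer of a totally real number field K can be scaled by
the square of a unit so that all its real embeddings are within a multiplicative factor λ of
each other, λ depending only on K. -/
theorem exists_unit_balancing
    (K : Type*) [Field K] [NumberField K]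
    (htr : Fintype.card (K →+* ℝ) = finrank ℚ K) :
    ∃ lam : ℝ, 1 ≤ lam ∧ ∀ h : 𝓞 K, (∀ ν : K →+* ℝ, 0 < ν (h : K)) →
      ∃ ε : (𝓞 K)ˣ, ∀ ν μ : K →+* ℝ,
        ν (((ε : 𝓞 K) : K) ^ 2 * (h : K)) ≤ lam * μ (((ε : 𝓞 K) : K) ^ 2 * (h : K)) := by
  classical
  -- the embeddings into ℂ are exactly the compositions of real embeddings with ℝ ↪ ℂ
  set e : (K →+* ℝ) → (K →+* ℂ) := fun ν => Complex.ofRealHom.comp ν with he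
  have he_inj : Function.Injective e := by
    intro ν₁ ν₂ h
    ext x
    have := RingHom.congr_fun h x
    simpa [e] using this
  have he_bij : Function.Bijective e := by
    rw [Fintype.bijective_iff_injective_and_card]
    exact ⟨he_inj, by rw [htr, NumberField.Embeddings.card K ℂ]⟩
  -- every complex embedding is real
  have hreal : ∀ φ : K →+* ℂ, NumberField.ComplexEmbedding.IsReal φ := by
    intro φ
    obtain ⟨ν, rfl⟩ := he_bij.2 φ
    rw [NumberField.ComplexEmbedding.isReal_iff]
    ext x
    simp [e, NumberField.ComplexEmbedding.conjugate]
  -- every infinite place is real, hence has multiplicity 1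
  have hwreal : ∀ w : InfinitePlace K, w.IsReal := fun w =>
    ⟨w.embedding, hreal _, InfinitePlace.mk_embedding w⟩
  have hmult : ∀ w : InfinitePlace K, (InfinitePlace.mult w : ℝ) = 1 := by
    intro w
    rw [InfinitePlace.mult, if_pos (hwreal w)]
    norm_num
  -- the map from real embeddings to infinite places, and its surjectivity
  set p : (K →+* ℝ) → InfinitePlace K := fun ν => InfinitePlace.mk (e ν) with hp
  have hp_apply : ∀ (ν : K →+* ℝ) (x : K), 0 ≤ ν x → (p ν) x = ν x := by
    intro ν x hx
    rw [hp, InfinitePlace.apply]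
    simp [e, Complex.norm_real, abs_of_nonneg hx]
  -- the lattice approximation constant
  obtain ⟨C, hC0, hC⟩ := exists_approx_of_span_top (Units.unitLattice K)
    (Units.dirichletUnitTheorem.unitLattice_span_eq_top K)
  set n : ℕ := Fintype.card (InfinitePlace K) with hn
  have hn0 : 0 < n := Fintype.card_pos
  refine ⟨Real.exp (4 * C * n), Real.one_le_exp (by positivity), fun h hpos => ?_⟩
  -- h is nonzero
  have hKν : Nonempty (K →+* ℝ) := by
    rw [← Fintype.card_pos_iff, htr]; exact finrank_pos
  obtain ⟨ν₁⟩ := hKν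
  have hh0 : (h : K) ≠ 0 := by
    intro h0
    have := hpos ν₁
    rw [h0, map_zero] at this
    exact lt_irrefl _ this
  have hwpos : ∀ w : InfinitePlace K, 0 < w (h : K) := fun w =>
    InfinitePlace.pos_iff.mpr hh0
  -- set up the target vector
  set t : InfinitePlace K → ℝ := fun w => Real.log (w (h : K)) with ht
  set s : ℝ := (∑ w, t w) / n with hs
  set y : {w : InfinitePlace K // w ≠ Units.dirichletUnitTheorem.w₀} → ℝ := fun w => (s - t w.1) / 2 with hy
  obtain ⟨u, huL, hu⟩ := hC y
  obtain ⟨x, -, hx⟩ := Submodule.mem_map.mp huL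
  set ε : (𝓞 K)ˣ := Additive.toMul x with hε
  have hxε : Units.logEmbedding K (Additive.ofMul ε) = u := hx
  -- key estimate for places ≠ w₀
  have hkey : ∀ w : {w : InfinitePlace K // w ≠ Units.dirichletUnitTheorem.w₀},
      |2 * Real.log (w.1 (ε : K)) + t w.1 - s| ≤ 2 * C := by
    intro w
    have h1 : |y w - u w| ≤ C := by
      have := norm_le_pi_norm (y - u) w
      rw [Pi.sub_apply, Real.norm_eq_abs] at this
      exact this.trans hu
    have h2 : u w = Real.log (w.1 (ε : K)) := by
      rw [← hxε, Units.dirichletUnitTheorem.logEmbedding_component, hmult w.1, one_mul]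
    rw [h2, hy] at h1
    simp only at h1
    have heq : 2 * Real.log (w.1 (ε : K)) + t w.1 - s
        = 2 * (Real.log (w.1 (ε : K)) - (s - t w.1) / 2) := by ring
    rw [heq, abs_mul, abs_two, abs_sub_comm]
    linarith
  -- sum over all places splits off w₀
  have hsplit : ∀ f : InfinitePlace K → ℝ,
      ∑ w, f w = f Units.dirichletUnitTheorem.w₀ + ∑ w : {w : InfinitePlace K // w ≠ Units.dirichletUnitTheorem.w₀}, f w.1 := by
    intro f
    rw [← Finset.insert_erase (Finset.mem_univ (Units.dirichletUnitTheorem.w₀ : InfinitePlace K)),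
      Finset.sum_insert (Finset.notMem_erase _ _)]
    congr 1
    refine (Finset.sum_subtype _ (fun w => ?_) f)
    constructor
    · exact fun hw => Finset.ne_of_mem_erase hw
    · exact fun hw => Finset.mem_erase_of_ne_of_mem hw (Finset.mem_univ w)
  -- the estimate for w₀
  have hsum_ts : ∑ w, (t w - s) = 0 := by
    rw [Finset.sum_sub_distrib, Finset.sum_const, Finset.card_univ, hs]
    rw [nsmul_eq_mul, ← hn, mul_div_cancel₀ _ (Nat.cast_ne_zero.mpr hn0.ne'), sub_self]
  have hlogsum : ∑ w : {w : InfinitePlace K // w ≠ Units.dirichletUnitTheorem.w₀}, Real.log (w.1 (ε : K))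
      = - Real.log ((Units.dirichletUnitTheorem.w₀ : InfinitePlace K) (ε : K)) := by
    have h5 := Units.dirichletUnitTheorem.sum_logEmbedding_component (K := K) ε
    simp only [Units.dirichletUnitTheorem.logEmbedding_component] at h5
    calc ∑ w : {w : InfinitePlace K // w ≠ Units.dirichletUnitTheorem.w₀}, Real.log (w.1 (ε : K))
        = ∑ w : {w : InfinitePlace K // w ≠ Units.dirichletUnitTheorem.w₀},
            (InfinitePlace.mult w.1 : ℝ) * Real.log (w.1 (ε : K)) :=
          Finset.sum_congr rfl fun w _ => by rw [hmult w.1, one_mul]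
      _ = - (InfinitePlace.mult (Units.dirichletUnitTheorem.w₀ : InfinitePlace K) : ℝ) *
            Real.log ((Units.dirichletUnitTheorem.w₀ : InfinitePlace K) (ε : K)) := by
          exact_mod_cast h5
      _ = - Real.log ((Units.dirichletUnitTheorem.w₀ : InfinitePlace K) (ε : K)) := by
          rw [hmult]; ring
  have hkey0 : |2 * Real.log ((Units.dirichletUnitTheorem.w₀ : InfinitePlace K) (ε : K)) + t Units.dirichletUnitTheorem.w₀ - s|
      ≤ 2 * C * n := by
    have h3 : t Units.dirichletUnitTheorem.w₀ - s = - ∑ w : {w : InfinitePlace K // w ≠ Units.dirichletUnitTheorem.w₀}, (t w.1 - s) := by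
      have := hsplit (fun w => t w - s)
      rw [hsum_ts] at this
      linarith
    have h4 : 2 * Real.log ((Units.dirichletUnitTheorem.w₀ : InfinitePlace K) (ε : K)) + t Units.dirichletUnitTheorem.w₀ - s
        = - ∑ w : {w : InfinitePlace K // w ≠ Units.dirichletUnitTheorem.w₀},
            (2 * Real.log (w.1 (ε : K)) + t w.1 - s) := by
      have hsum : ∑ w : {w : InfinitePlace K // w ≠ Units.dirichletUnitTheorem.w₀},
            (2 * Real.log (w.1 (ε : K)) + t w.1 - s)
          = 2 * (∑ w : {w : InfinitePlace K // w ≠ Units.dirichletUnitTheorem.w₀},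
              Real.log (w.1 (ε : K)))
            + ∑ w : {w : InfinitePlace K // w ≠ Units.dirichletUnitTheorem.w₀}, (t w.1 - s) := by
        rw [Finset.mul_sum, ← Finset.sum_add_distrib]
        exact Finset.sum_congr rfl fun w _ => by ring
      rw [hsum, hlogsum]
      rw [show (∑ w : {w : InfinitePlace K // w ≠ Units.dirichletUnitTheorem.w₀}, (t w.1 - s))
          = -(t Units.dirichletUnitTheorem.w₀ - s) by linarith [h3]]
      ring
    rw [h4, abs_neg]
    calc |∑ w : {w : InfinitePlace K // w ≠ Units.dirichletUnitTheorem.w₀},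
            (2 * Real.log (w.1 (ε : K)) + t w.1 - s)|
        ≤ ∑ w : {w : InfinitePlace K // w ≠ Units.dirichletUnitTheorem.w₀},
            |2 * Real.log (w.1 (ε : K)) + t w.1 - s| := Finset.abs_sum_le_sum_abs _ _
      _ ≤ ∑ _w : {w : InfinitePlace K // w ≠ Units.dirichletUnitTheorem.w₀}, (2 * C) :=
          Finset.sum_le_sum fun w _ => hkey w
      _ = (Fintype.card {w : InfinitePlace K // w ≠ Units.dirichletUnitTheorem.w₀}) * (2 * C) := by
          rw [Finset.sum_const, Finset.card_univ, nsmul_eq_mul]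
      _ ≤ n * (2 * C) := by
          have : Fintype.card {w : InfinitePlace K // w ≠ Units.dirichletUnitTheorem.w₀} ≤ n := by
            rw [hn]; exact Fintype.card_subtype_le _
          apply mul_le_mul_of_nonneg_right _ (by positivity)
          exact_mod_cast this
      _ = 2 * C * n := by ring
  -- combined estimate for all places
  have hall : ∀ w : InfinitePlace K, |Real.log (w ((ε : K) ^ 2 * (h : K))) - s| ≤ 2 * C * n := by
    intro w
    have hεpos : 0 < w (ε : K) := InfinitePlace.pos_iff.mpr
      (NumberField.RingOfIntegers.coe_ne_zero_iff.mpr (Units.ne_zero ε))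
    have hlog : Real.log (w ((ε : K) ^ 2 * (h : K)))
        = 2 * Real.log (w (ε : K)) + t w := by
      rw [map_mul, map_pow, Real.log_mul (by positivity) (ne_of_gt (hwpos w)),
        Real.log_pow]
      push_cast; ring
    rw [hlog]
    by_cases hw : w = Units.dirichletUnitTheorem.w₀
    · subst hw
      exact hkey0
    · have hn1 : (1:ℝ) ≤ n := by exact_mod_cast hn0
      calc |2 * Real.log (w (ε : K)) + t w - s| ≤ 2 * C := hkey ⟨w, hw⟩
        _ ≤ 2 * C * n := by nlinarith
  -- conclude
  refine ⟨ε, fun ν μ => ?_⟩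
  have hx : ∀ ρ : K →+* ℝ, 0 < ρ ((ε : K) ^ 2 * (h : K)) := by
    intro ρ
    rw [map_mul, map_pow]
    have : ρ (ε : K) ≠ 0 := by
      intro h0
      have : ((ε : 𝓞 K) : K) = 0 := by
        apply ρ.injective
        rw [h0, map_zero]
      exact NumberField.RingOfIntegers.coe_ne_zero_iff.mpr (Units.ne_zero ε) this
    have := hpos ρ
    positivity
  have hνw : ν ((ε : K) ^ 2 * (h : K)) = (p ν) ((ε : K) ^ 2 * (h : K)) :=
    (hp_apply ν _ (le_of_lt (hx ν))).symm
  have hμw : μ ((ε : K) ^ 2 * (h : K)) = (p μ) ((ε : K) ^ 2 * (h : K)) :=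
    (hp_apply μ _ (le_of_lt (hx μ))).symm
  rw [hνw, hμw]
  have hνpos : 0 < (p ν) ((ε : K) ^ 2 * (h : K)) := by rw [← hνw]; exact hx ν
  have hμpos : 0 < (p μ) ((ε : K) ^ 2 * (h : K)) := by rw [← hμw]; exact hx μ
  have hlog : Real.log ((p ν) ((ε : K) ^ 2 * (h : K)))
      ≤ 4 * C * n + Real.log ((p μ) ((ε : K) ^ 2 * (h : K))) := by
    have h1 := hall (p ν)
    have h2 := hall (p μ)
    rw [abs_le] at h1 h2
    have : (2:ℝ) * C * n + (2 * C * n) = 4 * C * n := by ring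
    linarith
  calc (p ν) ((ε : K) ^ 2 * (h : K))
      = Real.exp (Real.log ((p ν) ((ε : K) ^ 2 * (h : K)))) := (Real.exp_log hνpos).symm
    _ ≤ Real.exp (4 * C * n + Real.log ((p μ) ((ε : K) ^ 2 * (h : K)))) :=
        Real.exp_le_exp.mpr hlog
    _ = Real.exp (4 * C * n) * (p μ) ((ε : K) ^ 2 * (h : K)) := by
        rw [Real.exp_add, Real.exp_log hμpos]
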